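/- If a probability distribution P and a DAG G are faithful to each other, then for every variable T the Markov blanket MB(T) is unique and equals the union of the parents of T, the children of T, and the spouses of T (nodes sharing a common child with T). -/

import Mathlib

open scoped Classical

/-- A directed graph is acyclic if no vertex reaches itself by a nonempty directed walk. -/
def Acyclic {V : Type*} (adj : V → V → Prop) : Prop :=
  ∀ v, ¬ Relation.TransGen adj v v

/-- `Desc adj x y` : `y` is a (proper) descendant of `x`. -/
def Desc {V : Type*} (adj : V → V → Prop) (x y : V) : Prop :=
  Relation.TransGen adj x y

/-- An (undirected) path between `M` and `N` in the directed graph `adj`,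
represented as the list of its vertices. -/
def IsTrail {V : Type*} (adj : V → V → Prop) (p : List V) (M N : V) : Prop :=
  p.Chain' (fun a b => adj a b ∨ adj b a) ∧ p.head? = some M ∧ p.getLast? = some N ∧
    p.Nodup ∧ 2 ≤ p.length

/-- Interior position `i` of the path `p` is a collider (both adjacent edges point into it). -/
def ColliderAt {V : Type*} (adj : V → V → Prop) (p : List V) (i : ℕ) : Prop :=
  ∃ a x b, p[i-1]? = some a ∧ p[i]? = some x ∧ p[i+1]? = some b ∧ adj a x ∧ adj b x

/-- The path `p` is blocked by the conditioning set `Z`: some interior node is a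
non-collider belonging to `Z`, or a collider such that neither it nor any of its
descendants belongs to `Z`. -/
def Blocked {V : Type*} (adj : V → V → Prop) (Z : Set V) (p : List V) : Prop :=
  ∃ i x, 0 < i ∧ i + 1 < p.length ∧ p[i]? = some x ∧
    ((¬ ColliderAt adj p i ∧ x ∈ Z) ∨
     (ColliderAt adj p i ∧ x ∉ Z ∧ ∀ d, Desc adj x d → d ∉ Z))

/-- `Z` d-separates `M` and `N`: every path between them is blocked. -/
def DSep {V : Type*} (adj : V → V → Prop) (Z : Set V) (M N : V) : Prop :=
  ∀ p, IsTrail adj p M N → Blocked adj Z p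

/-- d-separation of sets of nodes. -/
def DSepS {V : Type*} (adj : V → V → Prop) (Z A B : Set V) : Prop :=
  ∀ M ∈ A, ∀ N ∈ B, DSep adj Z M N

section Aux
variable {V : Type*} {adj : V → V → Prop}

lemma acyc_irrefl (h : Acyclic adj) (x : V) : ¬ adj x x :=
  fun hx => h x (Relation.TransGen.single hx)

lemma acyc_asymm (h : Acyclic adj) {x y : V} (hxy : adj x y) : ¬ adj y x :=
  fun hyx => h x (Relation.TransGen.head hxy (Relation.TransGen.single hyx))

lemma not_blocked_pair (Z : Set V) (a b : V) : ¬ Blocked adj Z [a, b] := by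
  rintro ⟨i, x, hi, hlen, -⟩
  simp only [List.length] at hlen
  omega

lemma not_blocked_triple (hacyc : Acyclic adj) {Z : Set V} {T c v : V}
    (hTc : adj T c) (hvc : adj v c) (hcZ : c ∈ Z) : ¬ Blocked adj Z [T, c, v] := by
  rintro ⟨i, x, hi, hlen, hx, hcase⟩
  have hi1 : i = 1 := by simp only [List.length] at hlen; omega
  subst hi1
  have hxc : c = x := by simpa using hx
  subst hxc
  have hcol : ColliderAt adj [T, c, v] 1 := ⟨T, c, v, by simp, by simp, by simp, hTc, hvc⟩
  rcases hcase with ⟨hnc, -⟩ | ⟨-, hnZ, -⟩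
  · exact hnc hcol
  · exact hnZ hcZ

lemma blanket_dsep (hacyc : Acyclic adj) {Z : Set V} {T N : V}
    (hZ1 : ∀ v, adj v T → v ∈ Z) (hZ2 : ∀ v, adj T v → v ∈ Z)
    (hZ3 : ∀ v c, v ≠ T → adj T c → adj v c → v ∈ Z)
    (hN : N ∉ Z) (hNT : N ≠ T) : DSep adj Z T N := by
  rintro p ⟨hchain, hhead, hlast, hnodup, hlen⟩
  obtain ⟨a, b, rest, rfl⟩ : ∃ a b rest, p = a :: b :: rest := by
    match p, hlen with
    | a :: b :: rest, _ => exact ⟨a, b, rest, rfl⟩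
  obtain rfl : T = a := by simpa using hhead.symm
  have edge1 : adj T b ∨ adj b T := (List.isChain_cons_cons.mp hchain).1
  have hbZ : b ∈ Z := edge1.elim (hZ2 b) (hZ1 b)
  cases rest with
  | nil =>
    obtain rfl : N = b := by simpa using hlast.symm
    exact absurd hbZ hN
  | cons c rest2 =>
    have edge2 : adj b c ∨ adj c b := (List.isChain_cons_cons.mp (List.isChain_cons_cons.mp hchain).2).1
    by_cases hcol : ColliderAt adj (T :: b :: c :: rest2) 1
    · obtain ⟨a', x', b', ha', hx', hb', hax, hbx⟩ := hcol
      obtain rfl : T = a' := by simpa using ha'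
      obtain rfl : b = x' := by simpa using hx'
      obtain rfl : c = b' := by simpa using hb'
      have hcT : c ≠ T := by
        intro h
        exact (List.nodup_cons.mp hnodup).1 (by simp [← h])
      have hcZ : c ∈ Z := hZ3 c b hcT hax hbx
      cases rest2 with
      | nil =>
        obtain rfl : N = c := by simpa using hlast.symm
        exact absurd hcZ hN
      | cons d rest3 =>
        have hnc : ¬ ColliderAt adj (T :: b :: c :: d :: rest3) 2 := by
          rintro ⟨a₂, x₂, b₂, ha₂, hx₂, hb₂, hax₂, hbx₂⟩
          obtain rfl : b = a₂ := by simpa using ha₂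
          obtain rfl : c = x₂ := by simpa using hx₂
          exact acyc_asymm hacyc hbx hax₂
        exact ⟨2, c, by omega, by simp, by simp, Or.inl ⟨hnc, hcZ⟩⟩
    · exact ⟨1, b, by omega, by simp, by simp, Or.inl ⟨hcol, hbZ⟩⟩
end Aux

/-- If a distribution (whose conditional-independence relation is `ci`)
and a DAG are faithful to each other, then the Markov blanket of every variable `T` is
unique and equals parents ∪ children ∪ spouses of `T`: this set is a Markov blanket,
and every (inclusion-)minimal Markov blanket of `T` equals it. -/
theorem faithful_markov_blanket_unique
    {V : Type*} [Fintype V] (adj : V → V → Prop) (hacyc : Acyclic adj)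
    (ci : Set V → Set V → Set V → Prop)
    (hfaith : ∀ A B Z : Set V, ci A B Z ↔ DSepS adj Z A B)
    (T : V) :
    let IsMB : Set V → Prop := fun S => T ∉ S ∧ ci {T} (Set.univ \ (S ∪ {T})) S
    let blanket : Set V := {v | adj v T ∨ adj T v ∨
      (v ≠ T ∧ ¬ adj v T ∧ ¬ adj T v ∧ ∃ c, adj T c ∧ adj v c)}
    IsMB blanket ∧
      ∀ S : Set V, IsMB S → (∀ S' : Set V, IsMB S' → ¬ S' ⊂ S) → S = blanket := by
  intro IsMB blanket
  have hTb : T ∉ blanket := by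
    rintro (h | h | ⟨hne, -⟩)
    · exact acyc_irrefl hacyc T h
    · exact acyc_irrefl hacyc T h
    · exact hne rfl
  have hMBb : IsMB blanket := by
    refine ⟨hTb, (hfaith _ _ _).mpr ?_⟩
    rintro M hM N hN
    obtain rfl : T = M := (show M = T from hM).symm
    have hN' : N ∉ blanket ∪ {T} := hN.2
    have hNZ : N ∉ blanket := fun h => hN' (Or.inl h)
    have hNT : N ≠ T := fun h => hN' (Or.inr h)
    refine blanket_dsep hacyc (fun v h => Or.inl h) (fun v h => Or.inr (Or.inl h))
      (fun v c hvT hTc hvc => ?_) hNZ hNT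
    by_cases h1 : adj v T
    · exact Or.inl h1
    by_cases h2 : adj T v
    · exact Or.inr (Or.inl h2)
    · exact Or.inr (Or.inr ⟨hvT, h1, h2, c, hTc, hvc⟩)
  refine ⟨hMBb, fun S hS hmin => ?_⟩
  have hdsep : ∀ N, N ∉ S → N ≠ T → DSep adj S T N := by
    intro N hNS hNT
    refine (hfaith _ _ _).mp hS.2 T rfl N ⟨trivial, ?_⟩
    rintro (h | h)
    · exact hNS h
    · exact hNT h
  have hadjS : ∀ w, adj w T ∨ adj T w → w ∈ S := by
    intro w hw
    by_contra hwS
    have hwT : w ≠ T := by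
      intro h
      rw [h] at hw
      exact hw.elim (acyc_irrefl hacyc T) (acyc_irrefl hacyc T)
    have hb : Blocked adj S [T, w] :=
      hdsep w hwS hwT [T, w]
        ⟨by simpa [List.Chain'] using hw.symm, rfl, by simp, by simp [Ne.symm hwT], by simp⟩
    exact not_blocked_pair S T w hb
  have hsub : blanket ⊆ S := by
    rintro v (h | h | ⟨hvT, -, -, c, hTc, hvc⟩)
    · exact hadjS v (Or.inl h)
    · exact hadjS v (Or.inr h)
    · by_contra hvS
      have hcS : c ∈ S := hadjS c (Or.inr hTc)
      have hTc' : T ≠ c := by rintro rfl; exact acyc_irrefl hacyc T hTc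
      have hvc' : v ≠ c := by rintro rfl; exact acyc_irrefl hacyc v hvc
      have hb : Blocked adj S [T, c, v] :=
        hdsep v hvS hvT [T, c, v]
          ⟨by simp [List.Chain', hTc, hvc], rfl, by simp, by simp [hTc', Ne.symm hvT, Ne.symm hvc'],
            by simp⟩
      exact not_blocked_triple hacyc hTc hvc hcS hb
  have hne := hmin blanket hMBb
  by_contra hSne
  exact hne (HasSubset.Subset.ssubset_of_ne hsub (fun h => hSne h.symm))
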